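/- Let β ≥ 1. Then for every x > 0 and every integer k ≥ 2 the inequality (−1)^k ψ^{(k−1)}(x + β) ≥ (k−2)!/x^{k−1} − (β − 1/2)·(k−1)!/x^k holds. -/

import Mathlib

open Real Set Finset Filter MeasureTheory

set_option maxHeartbeats 1000000


local notation "lG" => (fun x : ℝ => Real.log (Real.Gamma x))


lemma pairing (u v : ℝ) (hv : 0 ≤ v) (huv : v ≤ u) (q : ℕ) :
    ∑ j ∈ range q, u ^ (j+1) * v ^ (q - j) ≤ (q : ℝ) / 2 * (u ^ (q+1) + v ^ (q+1)) := by
  have hu : 0 ≤ u := hv.trans huv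
  have key : ∀ j ∈ range q, u ^ (j+1) * v ^ (q-j) + u ^ (q-j) * v ^ (j+1) ≤ u ^ (q+1) + v ^ (q+1) := by
    intro j hj
    have hjq : j < q := mem_range.mp hj
    have h1 : 0 ≤ (u ^ (j+1) - v ^ (j+1)) * (u ^ (q-j) - v ^ (q-j)) :=
      mul_nonneg (sub_nonneg.mpr (pow_le_pow_left₀ hv huv _)) (sub_nonneg.mpr (pow_le_pow_left₀ hv huv _))
    have e1 : u ^ (j+1) * u ^ (q-j) = u ^ (q+1) := by
      rw [← pow_add]; congr 1; omega
    have e2 : v ^ (j+1) * v ^ (q-j) = v ^ (q+1) := by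
      rw [← pow_add]; congr 1; omega
    nlinarith [h1]
  have h2 : 2 * ∑ j ∈ range q, u ^ (j+1) * v ^ (q - j)
      = ∑ j ∈ range q, (u ^ (j+1) * v ^ (q-j) + u ^ (q-j) * v ^ (j+1)) := by
    rw [Finset.sum_add_distrib, two_mul]
    congr 1
    rw [← Finset.sum_range_reflect]
    apply Finset.sum_congr rfl
    intro j hj
    have hjq : j < q := mem_range.mp hj
    rw [show q - 1 - j + 1 = q - j from by omega, show q - (q - 1 - j) = j + 1 from by omega,
      mul_comm]
  have h3 : ∑ j ∈ range q, (u ^ (j+1) * v ^ (q-j) + u ^ (q-j) * v ^ (j+1))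
      ≤ ∑ j ∈ range q, (u ^ (q+1) + v ^ (q+1)) := Finset.sum_le_sum key
  rw [Finset.sum_const, card_range, nsmul_eq_mul] at h3
  linarith [h2 ▸ h3]

lemma powdiff {x y : ℝ} (hx : 0 < x) (hxy : x ≤ y) (q : ℕ) :
    (x^q)⁻¹ - (y^q)⁻¹ = ∑ j ∈ range q, (y - x) * (x⁻¹) ^ (j+1) * (y⁻¹) ^ (q - j) := by
  have hy : 0 < y := hx.trans_le hxy
  set u := x⁻¹; set v := y⁻¹
  have huv : u - v = (y - x) * (u * v) := by
    simp only [u, v]; rw [inv_sub_inv hx.ne' hy.ne']; ring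
  have h := geom_sum₂_mul u v q
  calc (x^q)⁻¹ - (y^q)⁻¹ = u ^ q - v ^ q := by rw [← inv_pow, ← inv_pow]
    _ = (∑ j ∈ range q, u ^ j * v ^ (q - 1 - j)) * (u - v) := h.symm
    _ = ∑ j ∈ range q, (y - x) * u ^ (j+1) * v ^ (q - j) := by
        rw [Finset.sum_mul]
        apply Finset.sum_congr rfl
        intro j hj
        have hjq : j < q := mem_range.mp hj
        rw [huv, show q - j = (q - 1 - j) + 1 from by omega]
        ring

lemma trap {a : ℝ} (ha : 0 < a) {q : ℕ} (hq : 1 ≤ q) :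
    (q:ℝ)⁻¹ * ((a^q)⁻¹ - ((a+1)^q)⁻¹) + 1/2 * ((a^(q+1))⁻¹ - ((a+1)^(q+1))⁻¹)
      ≤ (a^(q+1))⁻¹ := by
  have hb : (0:ℝ) < a + 1 := by linarith
  have hd := powdiff ha (by linarith : a ≤ a + 1) q
  have huv : (a+1)⁻¹ ≤ a⁻¹ := by
    apply inv_anti₀ ha; linarith
  have hP := pairing a⁻¹ (a+1)⁻¹ (by positivity) huv q
  have h1 : (a^q)⁻¹ - ((a+1)^q)⁻¹ ≤ (q:ℝ)/2 * ((a^(q+1))⁻¹ + ((a+1)^(q+1))⁻¹) := by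
    rw [hd]
    calc ∑ j ∈ range q, (a + 1 - a) * (a⁻¹) ^ (j+1) * ((a+1)⁻¹) ^ (q - j)
        = ∑ j ∈ range q, (a⁻¹) ^ (j+1) * ((a+1)⁻¹) ^ (q - j) := by
          apply Finset.sum_congr rfl; intro j hj; ring_nf
      _ ≤ (q:ℝ)/2 * ((a⁻¹) ^ (q+1) + ((a+1)⁻¹) ^ (q+1)) := hP
      _ = (q:ℝ)/2 * ((a^(q+1))⁻¹ + ((a+1)^(q+1))⁻¹) := by rw [inv_pow, inv_pow]
  have hq' : (0:ℝ) < q := by exact_mod_cast hq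
  have h2 : (q:ℝ)⁻¹ * ((a^q)⁻¹ - ((a+1)^q)⁻¹) ≤ 1/2 * ((a^(q+1))⁻¹ + ((a+1)^(q+1))⁻¹) := by
    rw [inv_mul_le_iff₀ hq']
    calc (a^q)⁻¹ - ((a+1)^q)⁻¹ ≤ (q:ℝ)/2 * ((a^(q+1))⁻¹ + ((a+1)^(q+1))⁻¹) := h1
      _ = (q:ℝ) * (1/2 * ((a^(q+1))⁻¹ + ((a+1)^(q+1))⁻¹)) := by ring
  linarith

lemma final_alg {x c : ℝ} (hx : 0 < x) (hc : 1 ≤ c) {m : ℕ} (hm : 1 ≤ m) :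
    (x^m)⁻¹ - ((x+c)^m)⁻¹ ≤ (m:ℝ) * (c - 1/2) * (x^(m+1))⁻¹ + (m:ℝ)/2 * ((x+c)^(m+1))⁻¹ := by
  have hy : (0:ℝ) < x + c := by linarith
  have hd := powdiff hx (by linarith : x ≤ x + c) m
  have huv : (x+c)⁻¹ ≤ x⁻¹ := by apply inv_anti₀ hx; linarith
  have hv : (0:ℝ) ≤ (x+c)⁻¹ := by positivity
  have hP := pairing x⁻¹ (x+c)⁻¹ hv huv m
  have hterm : ∀ j ∈ range m, (x⁻¹) ^ (j+1) * ((x+c)⁻¹) ^ (m - j) ≤ (x⁻¹) ^ (m+1) := by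
    intro j hj
    have hjq : j < m := mem_range.mp hj
    calc (x⁻¹) ^ (j+1) * ((x+c)⁻¹) ^ (m - j) ≤ (x⁻¹) ^ (j+1) * (x⁻¹) ^ (m - j) := by
          apply mul_le_mul_of_nonneg_left (pow_le_pow_left₀ hv huv _) (by positivity)
      _ = (x⁻¹) ^ (m+1) := by rw [← pow_add]; congr 1; omega
  have hsum : ∑ j ∈ range m, (x⁻¹) ^ (j+1) * ((x+c)⁻¹) ^ (m - j) ≤ (m:ℝ) * (x⁻¹)^(m+1) := by
    calc ∑ j ∈ range m, (x⁻¹) ^ (j+1) * ((x+c)⁻¹) ^ (m - j)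
        ≤ ∑ j ∈ range m, (x⁻¹) ^ (m+1) := Finset.sum_le_sum hterm
      _ = (m:ℝ) * (x⁻¹)^(m+1) := by rw [Finset.sum_const, card_range, nsmul_eq_mul]
  have hS : (0:ℝ) ≤ ∑ j ∈ range m, (x⁻¹) ^ (j+1) * ((x+c)⁻¹) ^ (m - j) := by
    apply Finset.sum_nonneg; intro j hj; positivity
  rw [hd]
  have e1 : ∑ j ∈ range m, (x + c - x) * (x⁻¹) ^ (j+1) * ((x+c)⁻¹) ^ (m - j)
      = c * ∑ j ∈ range m, (x⁻¹) ^ (j+1) * ((x+c)⁻¹) ^ (m - j) := by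
    rw [Finset.mul_sum]; apply Finset.sum_congr rfl; intro j hj; ring_nf
  rw [e1]
  have : c * ∑ j ∈ range m, (x⁻¹) ^ (j+1) * ((x+c)⁻¹) ^ (m - j)
      = (c - 1) * (∑ j ∈ range m, (x⁻¹) ^ (j+1) * ((x+c)⁻¹) ^ (m - j))
        + ∑ j ∈ range m, (x⁻¹) ^ (j+1) * ((x+c)⁻¹) ^ (m - j) := by ring
  rw [this]
  have h1 : (c - 1) * (∑ j ∈ range m, (x⁻¹) ^ (j+1) * ((x+c)⁻¹) ^ (m - j))
      ≤ (c - 1) * ((m:ℝ) * (x⁻¹)^(m+1)) := by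
    apply mul_le_mul_of_nonneg_left hsum (by linarith)
  have := hP
  simp only [inv_pow] at h1 this ⊢
  nlinarith [this, h1]

noncomputable def S (p : ℕ) (x : ℝ) : ℝ := ∑' n : ℕ, ((x + n)^p)⁻¹


lemma summable_term {x : ℝ} (hx : 0 < x) {p : ℕ} (hp : 2 ≤ p) :
    Summable (fun n : ℕ => ((x + n)^p)⁻¹) := by
  have h2 : Summable (fun n : ℕ => (((n:ℝ)+1)^2)⁻¹) := by
    have h0 : Summable (fun n : ℕ => (((n:ℝ))^2)⁻¹) := by
      simpa using Real.summable_one_div_nat_pow.mpr one_lt_two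
    have h1 := (summable_nat_add_iff 1).mpr h0
    refine h1.congr fun n => by push_cast; ring_nf
  set m := min x 1 with hm
  have hm0 : 0 < m := lt_min hx one_pos
  have hm1 : m ≤ 1 := min_le_right _ _
  apply Summable.of_nonneg_of_le (fun n => by positivity)
    (fun n => ?_) (h2.mul_left ((m^p)⁻¹))
  have hxn : m * ((n:ℝ)+1) ≤ x + n := by
    have h1 : m ≤ x := min_le_left _ _
    nlinarith [Nat.cast_nonneg (α := ℝ) n]
  have h3 : m^p * ((n:ℝ)+1)^2 ≤ (x + n)^p := by
    calc m^p * ((n:ℝ)+1)^2 ≤ m^p * ((n:ℝ)+1)^p := by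
          apply mul_le_mul_of_nonneg_left _ (by positivity)
          exact pow_le_pow_right₀ (by linarith [Nat.cast_nonneg (α := ℝ) n]) hp
      _ = (m *.((n:ℝ)+1))^p := by rw [mul_pow]
      _ ≤ (x + n)^p := by
          apply pow_le_pow_left₀ (by positivity) hxn
  rw [← mul_inv]
  exact inv_anti₀ (by positivity) h3

lemma S_lower {p : ℕ} (hp : 2 ≤ p) {y : ℝ} (hy : 0 < y) :
    ((p:ℝ)-1)⁻¹ * (y^(p-1))⁻¹ + 1/2 * (y^p)⁻¹ ≤ S p y := by
  obtain ⟨q, rfl⟩ : ∃ q, p = q + 1 := ⟨p - 1, by omega⟩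
  have hq1 : 1 ≤ q := by omega
  have hsum := summable_term hy hp
  -- partial sum lower bound
  have key : ∀ N : ℕ, (q:ℝ)⁻¹ * ((y^q)⁻¹ - ((y+N)^q)⁻¹) + 1/2 * ((y^(q+1))⁻¹ - ((y+N)^(q+1))⁻¹)
      ≤ ∑ n ∈ range N, ((y + n)^(q+1))⁻¹ := by
    intro N
    have := Finset.sum_range_sub' (fun n : ℕ => (q:ℝ)⁻¹ * ((y+n)^q)⁻¹ + 1/2 * ((y+n)^(q+1))⁻¹) N
    calc (q:ℝ)⁻¹ * ((y^q)⁻¹ - ((y+N)^q)⁻¹) + 1/2 * ((y^(q+1))⁻¹ - ((y+N)^(q+1))⁻¹)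
        = ∑ n ∈ range N, (((q:ℝ)⁻¹ * ((y+n)^q)⁻¹ + 1/2 * ((y+n)^(q+1))⁻¹)
            - ((q:ℝ)⁻¹ * ((y+(n+1:ℕ))^q)⁻¹ + 1/2 * ((y+(n+1:ℕ))^(q+1))⁻¹)) := by
          rw [this]; push_cast; ring_nf
      _ ≤ ∑ n ∈ range N, ((y + n)^(q+1))⁻¹ := by
          apply Finset.sum_le_sum
          intro n hn
          have ha : (0:ℝ) < y + n := by positivity
          have := trap ha hq1
          push_cast
          calc (q:ℝ)⁻¹ * ((y+(n:ℝ))^q)⁻¹ + 1/2 * ((y+(n:ℝ))^(q+1))⁻¹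
              - ((q:ℝ)⁻¹ * ((y+((n:ℝ)+1))^q)⁻¹ + 1/2 * ((y+((n:ℝ)+1))^(q+1))⁻¹)
              = (q:ℝ)⁻¹ * (((y+n)^q)⁻¹ - ((y+n+1)^q)⁻¹)
                + 1/2 * (((y+n)^(q+1))⁻¹ - ((y+n+1)^(q+1))⁻¹) := by ring_nf
            _ ≤ ((y + n)^(q+1))⁻¹ := this
  have hpartial : ∀ N, ∑ n ∈ range N, ((y + n)^(q+1))⁻¹ ≤ S (q+1) y := fun N =>
    Summable.sum_le_tsum (range N) (fun i _ => by positivity) hsum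
  have hlim : Tendsto (fun N : ℕ => (q:ℝ)⁻¹ * ((y^q)⁻¹ - ((y+N)^q)⁻¹)
      + 1/2 * ((y^(q+1))⁻¹ - ((y+N)^(q+1))⁻¹)) atTop
      (nhds ((q:ℝ)⁻¹ * ((y^q)⁻¹ - 0) + 1/2 * ((y^(q+1))⁻¹ - 0))) := by
    have hN : Tendsto (fun N : ℕ => y + (N:ℝ)) atTop atTop :=
      tendsto_atTop_add_const_left _ _ tendsto_natCast_atTop_atTop
    have t1 : Tendsto (fun N : ℕ => ((y+(N:ℝ))^q)⁻¹) atTop (nhds 0) :=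
      (tendsto_inv_atTop_zero).comp ((tendsto_pow_atTop (by omega)).comp hN)
    have t2 : Tendsto (fun N : ℕ => ((y+(N:ℝ))^(q+1))⁻¹) atTop (nhds 0) :=
      (tendsto_inv_atTop_zero).comp ((tendsto_pow_atTop (by omega)).comp hN)
    exact ((tendsto_const_nhds.sub t1).const_mul _).add ((tendsto_const_nhds.sub t2).const_mul _)
  have := le_of_tendsto hlim (Eventually.of_forall fun N => (key N).trans (hpartial N))
  simp only [sub_zero] at this
  have hcast : ((q:ℝ)+1-1)⁻¹ = (q:ℝ)⁻¹ := by ring_nf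
  calc (((q+1:ℕ):ℝ)-1)⁻¹ * (y^(q+1-1))⁻¹ + 1/2 * (y^(q+1))⁻¹
      = (q:ℝ)⁻¹ * (y^q)⁻¹ + 1/2 * (y^(q+1))⁻¹ := by push_cast; ring_nf
    _ ≤ S (q+1) y := this

lemma hasDerivAt_term {p : ℕ} (hp : 1 ≤ p) (n : ℕ) {y : ℝ} (hy : 0 < y) :
    HasDerivAt (fun z : ℝ => ((z + n)^p)⁻¹) (-(p:ℝ) * ((y+n)^(p+1))⁻¹) y := by
  have hyn : (0:ℝ) < y + n := by positivity
  have h1 : HasDerivAt (fun z : ℝ => (z + n)^p) ((p:ℝ) * (y+n)^(p-1) * 1) y :=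
    ((hasDerivAt_id y).add_const (n:ℝ)).pow p
  have h2 := h1.fun_inv (by positivity)
  refine h2.congr_deriv ?_
  rw [mul_one]
  have e1 : ((y+n)^p)^2 = (y+n)^(p-1) * (y+n)^(p+1) := by
    rw [← pow_mul, ← pow_add]; congr 1; omega
  rw [e1]
  have h3 : (y+n)^(p-1) ≠ 0 := by positivity
  have h4 : (y+n)^(p+1) ≠ 0 := by positivity
  field_simp

set_option maxHeartbeats 1000000 in
lemma hasDerivAt_S {p : ℕ} (hp : 2 ≤ p) {x : ℝ} (hx : 0 < x) :
    HasDerivAt (S p) (-(p:ℝ) * S (p+1) x) x := by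
  have hx2 : 0 < x/2 := by linarith
  have hu : Summable (fun n : ℕ => (p:ℝ) * ((x/2 + n)^(p+1))⁻¹) :=
    (summable_term hx2 (by omega)).mul_left _
  have hbound : ∀ (n : ℕ) (y : ℝ), y ∈ Ioi (x/2) →
      ‖-(p:ℝ) * ((y+n)^(p+1))⁻¹‖ ≤ (p:ℝ) * ((x/2 + n)^(p+1))⁻¹ := by
    intro n y hyt
    have hy : x/2 < y := hyt
    have hy0 : 0 < y := lt_trans hx2 hy
    have h1 : (0:ℝ) < y + n := by positivity
    rw [norm_mul, norm_neg, norm_natCast, norm_inv, Real.norm_of_nonneg (by positivity)]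
    apply mul_le_mul_of_nonneg_left _ (Nat.cast_nonneg p)
    apply inv_anti₀ (by positivity)
    apply pow_le_pow_left₀ (by linarith) (by linarith)
  have key : HasDerivAt (fun z : ℝ => ∑' n : ℕ, ((z + n)^p)⁻¹)
      (∑' n : ℕ, -(p:ℝ) * ((x+n)^(p+1))⁻¹) x :=
    hasDerivAt_tsum_of_isPreconnected hu isOpen_Ioi isPreconnected_Ioi
      (fun n y hyt => hasDerivAt_term (by omega) n (lt_trans hx2 hyt))
      hbound (mem_Ioi.mpr (by linarith : x/2 < x)) (summable_term hx (by omega))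
      (mem_Ioi.mpr (by linarith : x/2 < x))
  have e : (∑' n : ℕ, -(p:ℝ) * ((x+n)^(p+1))⁻¹) = -(p:ℝ) * S (p+1) x := tsum_mul_left
  rw [e] at key
  exact key

lemma contDiffOn_logGamma : ContDiffOn ℝ ⊤ (fun x : ℝ => Real.log (Real.Gamma x)) (Ioi 0) := by
  intro x hx
  have hx : (0:ℝ) < x := hx
  have hG : AnalyticAt ℂ Complex.Gamma (x : ℂ) := by
    apply DifferentiableOn.analyticAt (s := {s : ℂ | 0 < s.re})
    · intro s hs
      exact (Complex.differentiableAt_Gamma s (fun m => by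
        intro h; rw [h] at hs; simp at hs
        have : (0:ℝ) ≤ (m:ℝ) := m.cast_nonneg
        norm_num at hs; linarith)).differentiableWithinAt
    · exact (Continuous.isOpen_preimage Complex.continuous_re _ isOpen_Ioi).mem_nhds (by simpa using hx)
  have hGC : ContDiffAt ℝ ⊤ Complex.Gamma (x : ℂ) := (hG.contDiffAt).restrict_scalars ℝ
  have h1 : ContDiffAt ℝ ⊤ (fun y : ℝ => (Complex.Gamma (y : ℂ)).re) x := by
    exact Complex.reCLM.contDiff.contDiffAt.comp x (hGC.comp x Complex.ofRealCLM.contDiff.contDiffAt)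
  have h2 : ContDiffAt ℝ ⊤ Real.Gamma x := by
    apply h1.congr_of_eventuallyEq
    filter_upwards with y
    rw [Complex.Gamma_ofReal, Complex.ofReal_re]
  have h3 : ContDiffAt ℝ ⊤ (fun x : ℝ => Real.log (Real.Gamma x)) x := by
    exact (Real.contDiffAt_log.mpr (Real.Gamma_pos_of_pos hx).ne').comp x h2
  exact h3.contDiffWithinAt

lemma cd1 : ContDiffOn ℝ ⊤ (deriv lG) (Ioi 0) :=
  contDiffOn_logGamma.deriv_of_isOpen isOpen_Ioi le_top

lemma cd2 : ContDiffOn ℝ ⊤ (deriv (deriv lG)) (Ioi 0) :=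
  cd1.deriv_of_isOpen isOpen_Ioi le_top

lemma diff_f {x : ℝ} (hx : 0 < x) : DifferentiableAt ℝ lG x :=
  ((contDiffOn_logGamma.contDiffAt (Ioi_mem_nhds hx)).differentiableAt (by simp))

lemma diff_f1 {x : ℝ} (hx : 0 < x) : DifferentiableAt ℝ (deriv lG) x :=
  ((cd1.contDiffAt (Ioi_mem_nhds hx)).differentiableAt (by simp))

lemma diff_f2 {x : ℝ} (hx : 0 < x) : DifferentiableAt ℝ (deriv (deriv lG)) x :=
  ((cd2.contDiffAt (Ioi_mem_nhds hx)).differentiableAt (by simp))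

lemma cont_f2 {x : ℝ} (hx : 0 < x) : ContinuousAt (deriv (deriv lG)) x :=
  (diff_f2 hx).continuousAt

lemma f_rec {x : ℝ} (hx : 0 < x) : lG (x + 1) = lG x + Real.log x := by
  simp only [Real.Gamma_add_one hx.ne', Real.log_mul hx.ne' (Real.Gamma_pos_of_pos hx).ne',
    add_comm]

lemma f1_rec {x : ℝ} (hx : 0 < x) : deriv lG (x + 1) = deriv lG x + x⁻¹ := by
  rw [← deriv_comp_add_const lG 1 x]
  have h1 : (fun y => lG (y + 1)) =ᶠ[nhds x] (fun y => lG y + Real.log y) := by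
    filter_upwards [eventually_gt_nhds hx] with y hy using f_rec hy
  rw [h1.deriv_eq, deriv_fun_add (diff_f hx) (Real.differentiableAt_log hx.ne'),
    Real.deriv_log]

lemma f2_rec {x : ℝ} (hx : 0 < x) :
    deriv (deriv lG) (x + 1) = deriv (deriv lG) x - (x^2)⁻¹ := by
  rw [← deriv_comp_add_const (deriv lG) 1 x]
  have h1 : (fun y => deriv lG (y + 1)) =ᶠ[nhds x] (fun y => deriv lG y + y⁻¹) := by
    filter_upwards [eventually_gt_nhds hx] with y hy using f1_rec hy
  rw [h1.deriv_eq, deriv_fun_add (diff_f1 hx) (differentiableAt_inv hx.ne'), deriv_inv,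
    sub_eq_add_neg]

lemma f1_mono : MonotoneOn (deriv lG) (Ioi 0) := by
  intro a ha b hb hab
  rcases eq_or_lt_of_le hab with rfl | hab
  · exact le_rfl
  have h1 := convexOn_log_Gamma.slope_le_deriv ha hb hab (diff_f hb)
  have h2 := convexOn_log_Gamma.deriv_le_slope ha hb hab (diff_f ha)
  exact h2.trans h1

lemma f2_nonneg {x : ℝ} (hx : 0 < x) : 0 ≤ deriv (deriv lG) x := by
  have hd : HasDerivAt (deriv lG) (deriv (deriv lG) x) x := (diff_f1 hx).hasDerivAt
  have := hasDerivAt_iff_tendsto_slope.mp hd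
  have h2 : Tendsto (slope (deriv lG) x) (nhdsWithin x (Ioi x)) (nhds (deriv (deriv lG) x)) :=
    this.mono_left (nhdsWithin_mono x fun y hy => ne_of_gt hy)
  refine ge_of_tendsto h2 ?_
  filter_upwards [self_mem_nhdsWithin, (eventually_gt_nhds hx).filter_mono nhdsWithin_le_nhds]
    with y hy hy0
  have hxy : x < y := hy
  rw [slope_def_field]
  apply div_nonneg _ (by linarith)
  have := f1_mono (mem_Ioi.mpr hx) (mem_Ioi.mpr hy0) hxy.le
  linarith

lemma f2_partial {x : ℝ} (hx : 0 < x) (N : ℕ) :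
    deriv (deriv lG) x = deriv (deriv lG) (x + N) + ∑ n ∈ range N, ((x + n)^2)⁻¹ := by
  induction N with
  | zero => simp
  | succ N ih =>
    have hxN : 0 < x + N := by positivity
    have := f2_rec hxN
    rw [Finset.sum_range_succ, ih, show x + (N+1:ℕ) = (x + N) + 1 by push_cast; ring, this]
    push_cast
    ring

lemma S2_le_f2 {x : ℝ} (hx : 0 < x) : S 2 x ≤ deriv (deriv lG) x := by
  apply Real.tsum_le_of_sum_range_le (fun n => by positivity)
  intro N
  have := f2_partial hx N
  have h2 := f2_nonneg (show 0 < x + N by positivity)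
  linarith

lemma int_f2 {x : ℝ} (hx : 0 < x) :
    ∫ y in x..x+1, deriv (deriv lG) y = x⁻¹ := by
  have hIcc : uIcc x (x+1) ⊆ Ioi 0 := by
    rw [Set.uIcc_of_le (by linarith)]
    intro y hy
    exact lt_of_lt_of_le hx hy.1
  have h1 : ∫ y in x..x+1, deriv (deriv lG) y = deriv lG (x+1) - deriv lG x := by
    apply intervalIntegral.integral_eq_sub_of_hasDerivAt
    · intro t ht
      exact (diff_f1 (hIcc ht)).hasDerivAt
    · apply ContinuousOn.intervalIntegrable
      exact (cd2.continuousOn).mono hIcc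
  rw [h1, f1_rec hx]
  ring

lemma int_term {x : ℝ} (hx : 0 < x) (n : ℕ) :
    ∫ y in x..x+1, ((y + n)^2)⁻¹ = (x+n)⁻¹ - (x+1+n)⁻¹ := by
  have key : ∀ t ∈ uIcc x (x+1), HasDerivAt (fun y : ℝ => -(y+n)⁻¹) ((t+n)^2)⁻¹ t := by
    intro t ht
    rw [Set.uIcc_of_le (by linarith)] at ht
    have htn : (0:ℝ) < t + n := by
      have := ht.1
      have := Nat.cast_nonneg (α := ℝ) n
      linarith
    have h1 : HasDerivAt (fun y : ℝ => (y + n)⁻¹) (-1 / (t+n)^2) t :=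
      ((hasDerivAt_id t).add_const (n:ℝ)).inv htn.ne'
    have h2 := h1.neg
    refine h2.congr_deriv ?_
    ring
  rw [intervalIntegral.integral_eq_sub_of_hasDerivAt key]
  · ring
  · apply ContinuousOn.intervalIntegrable
    apply ContinuousOn.inv₀
    · fun_prop
    · intro t ht
      rw [Set.uIcc_of_le (by linarith)] at ht
      exact pow_ne_zero _ (by linarith [Nat.cast_nonneg (α := ℝ) n, ht.1] :
        (0:ℝ) < t + n).ne'

lemma tsum_telescope {x : ℝ} (hx : 0 < x) :
    ∑' n : ℕ, ((x+n)⁻¹ - (x+1+n)⁻¹) = x⁻¹ := by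
  have hs : HasSum (fun n : ℕ => (x+n)⁻¹ - (x+1+n)⁻¹) x⁻¹ := by
    rw [hasSum_iff_tendsto_nat_of_nonneg]
    · have hpartial : ∀ N : ℕ, ∑ i ∈ range N, ((x+i)⁻¹ - (x+1+i)⁻¹) = x⁻¹ - (x+N)⁻¹ := by
        intro N
        have := Finset.sum_range_sub' (fun n : ℕ => (x+(n:ℝ))⁻¹) N
        simp only [Nat.cast_zero, add_zero] at this
        rw [← this]
        apply Finset.sum_congr rfl
        intro i hi
        push_cast
        ring_nf
      simp only [hpartial]
      have : Tendsto (fun N : ℕ => (x+(N:ℝ))⁻¹) atTop (nhds 0) :=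
        tendsto_inv_atTop_zero.comp (tendsto_atTop_add_const_left _ _ tendsto_natCast_atTop_atTop)
      simpa using tendsto_const_nhds.sub this
    · intro n
      have h1 : (0:ℝ) < x + n := by positivity
      have h2 : (x+1+n)⁻¹ ≤ (x+n)⁻¹ := by
        apply inv_anti₀ h1; linarith
      linarith
  exact hs.tsum_eq

lemma int_S2 {x : ℝ} (hx : 0 < x) :
    ∫ y in x..x+1, S 2 y = x⁻¹ := by
  have hmeas : ∀ n : ℕ, AEStronglyMeasurable (fun y : ℝ => ((y + n)^2)⁻¹)
      (volume.restrict (Ioc x (x+1))) := by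
    intro n
    apply ContinuousOn.aestronglyMeasurable _ measurableSet_Ioc
    apply ContinuousOn.inv₀
    · fun_prop
    · intro t ht
      exact pow_ne_zero _ (by linarith [Nat.cast_nonneg (α := ℝ) n, ht.1] :
        (0:ℝ) < t + n).ne'
  have hbound : ∑' n : ℕ, ∫⁻ y in Ioc x (x+1), ‖((y + n)^2)⁻¹‖₊ ≠ ⊤ := by
    have h1 : ∀ n : ℕ, ∫⁻ y in Ioc x (x+1), ‖((y + n)^2)⁻¹‖₊
        ≤ ENNReal.ofReal (((x+n)^2)⁻¹) := by
      intro n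
      have h2 : ∀ y ∈ Ioc x (x+1), (‖((y + n)^2)⁻¹‖₊ : ENNReal)
          ≤ ENNReal.ofReal (((x+n)^2)⁻¹) := by
        intro y hy
        have hxn : (0:ℝ) < x + n := by positivity
        have hyn : x + n ≤ y + n := by linarith [hy.1]
        rw [← enorm_eq_nnnorm, ← ofReal_norm, Real.norm_of_nonneg (by positivity)]
        apply ENNReal.ofReal_le_ofReal
        apply inv_anti₀ (by positivity)
        apply pow_le_pow_left₀ hxn.le hyn
      calc ∫⁻ y in Ioc x (x+1), ‖((y + n)^2)⁻¹‖₊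
          ≤ ∫⁻ _ in Ioc x (x+1), ENNReal.ofReal (((x+n)^2)⁻¹) := by
            apply setLIntegral_mono' measurableSet_Ioc h2
        _ = ENNReal.ofReal (((x+n)^2)⁻¹) * volume (Ioc x (x+1)) := by
            rw [setLIntegral_const]
        _ = ENNReal.ofReal (((x+n)^2)⁻¹) := by
            rw [Real.volume_Ioc, show x+1-x = 1 by ring, ENNReal.ofReal_one, mul_one]
    have h3 : ∑' n : ℕ, ∫⁻ y in Ioc x (x+1), ‖((y + n)^2)⁻¹‖₊
        ≤ ∑' n : ℕ, ENNReal.ofReal (((x+n)^2)⁻¹) := ENNReal.tsum_le_tsum h1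
    have h4 : ∑' n : ℕ, ENNReal.ofReal (((x+n)^2)⁻¹) ≠ ⊤ := by
      rw [← ENNReal.ofReal_tsum_of_nonneg (fun n => by positivity) (summable_term hx le_rfl)]
      exact ENNReal.ofReal_ne_top
    exact ne_top_of_le_ne_top h4 h3
  have key : ∫ y in Ioc x (x+1), S 2 y = ∑' n : ℕ, ∫ y in Ioc x (x+1), ((y + n)^2)⁻¹ :=
    integral_tsum hmeas hbound
  rw [intervalIntegral.integral_of_le (by linarith : x ≤ x + 1), key]
  have hterm : ∀ n : ℕ, ∫ y in Ioc x (x+1), ((y + n)^2)⁻¹ = (x+n)⁻¹ - (x+1+n)⁻¹ := by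
    intro n
    rw [← intervalIntegral.integral_of_le (by linarith : x ≤ x + 1)]
    exact int_term hx n
  simp only [hterm]
  exact tsum_telescope hx

lemma f2_eq_S2 {x : ℝ} (hx : 0 < x) : deriv (deriv lG) x = S 2 x := by
  set L := fun y => deriv (deriv lG) y - S 2 y with hL
  have hL0 : ∀ y, 0 < y → 0 ≤ L y := fun y hy => sub_nonneg.mpr (S2_le_f2 hy)
  have hLc : ∀ y, 0 < y → ContinuousAt L y := by
    intro y hy
    exact (cont_f2 hy).sub (hasDerivAt_S le_rfl hy).continuousAt
  have hLint : ∫ y in x..x+1, L y = 0 := by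
    have hi1 : IntervalIntegrable (fun y => deriv (deriv lG) y) volume x (x+1) := by
      apply ContinuousOn.intervalIntegrable
      intro y hy
      rw [Set.uIcc_of_le (by linarith)] at hy
      exact (cont_f2 (lt_of_lt_of_le hx hy.1)).continuousWithinAt
    have hi2 : IntervalIntegrable (S 2) volume x (x+1) := by
      apply ContinuousOn.intervalIntegrable
      intro y hy
      rw [Set.uIcc_of_le (by linarith)] at hy
      exact ((hasDerivAt_S le_rfl (lt_of_lt_of_le hx hy.1)).continuousAt).continuousWithinAt
    rw [hL]
    simp only
    rw [intervalIntegral.integral_sub hi1 hi2, int_f2 hx, int_S2 hx, sub_self]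
  by_contra hne
  have hpos : 0 < L x := lt_of_le_of_ne (hL0 x hx) (fun h => hne (sub_eq_zero.mp h.symm))
  have hhalf : L x / 2 < L x := half_lt_self hpos
  -- find δ
  obtain ⟨ε, hε, hball⟩ := Metric.eventually_nhds_iff.mp ((hLc x hx).eventually
    (eventually_gt_nhds hhalf))
  set δ := min (ε/2) (1/2) with hδ
  have hδ0 : 0 < δ := lt_min (by linarith) one_half_pos
  have hδ1 : δ ≤ 1/2 := min_le_right _ _
  have hδε : δ < ε := lt_of_le_of_lt (min_le_left _ _) (by linarith)
  have hmem : ∀ y ∈ Icc x (x+δ), L x / 2 ≤ L y := by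
    intro y hy
    apply le_of_lt
    apply hball
    rw [Real.dist_eq, abs_of_nonneg (by linarith [hy.1])]
    linarith [hy.2]
  have hiL : ∀ a b : ℝ, x ≤ a → a ≤ b → b ≤ x + 1 → IntervalIntegrable L volume a b := by
    intro a b ha hab hb
    apply ContinuousOn.intervalIntegrable
    intro y hy
    rw [Set.uIcc_of_le hab] at hy
    exact (hLc y (by linarith [hy.1])).continuousWithinAt
  have hsplit : ∫ y in x..x+1, L y = (∫ y in x..x+δ, L y) + ∫ y in x+δ..x+1, L y := by
    rw [intervalIntegral.integral_add_adjacent_intervals (hiL x (x+δ) le_rfl (by linarith) (by linarith))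
      (hiL (x+δ) (x+1) (by linarith) (by linarith) le_rfl)]
  have h1 : δ * (L x / 2) ≤ ∫ y in x..x+δ, L y := by
    have := intervalIntegral.integral_mono_on (a := x) (b := x + δ) (by linarith)
      (intervalIntegrable_const (μ := volume) (c := L x / 2))
      (hiL x (x+δ) le_rfl (by linarith) (by linarith)) hmem
    rw [intervalIntegral.integral_const] at this
    calc δ * (L x / 2) = (x + δ - x) • (L x / 2) := by rw [smul_eq_mul]; ring_nf
      _ ≤ ∫ y in x..x+δ, L y := this
  have h2 : 0 ≤ ∫ y in x+δ..x+1, L y := by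
    apply intervalIntegral.integral_nonneg (by linarith)
    intro y hy
    exact hL0 y (by linarith [hy.1])
  rw [hsplit] at hLint
  have hprod : 0 < δ * (L x / 2) := mul_pos hδ0 (by linarith)
  linarith

lemma main_id : ∀ p : ℕ, 2 ≤ p → ∀ x : ℝ, 0 < x →
    iteratedDeriv p lG x = (-1)^p * (Nat.factorial (p-1) : ℝ) * S p x := by
  intro p
  induction p with
  | zero => omega
  | succ p ih =>
    intro hp x hx
    rcases Nat.lt_or_ge p 2 with hp2 | hp2
    · -- p + 1 = 2
      have hp1 : p = 1 := by omega
      subst hp1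
      have e : iteratedDeriv 2 lG x = deriv (deriv lG) x := by
        rw [show (2:ℕ) = 1 + 1 from rfl, iteratedDeriv_succ, iteratedDeriv_one]
      rw [e, f2_eq_S2 hx]
      norm_num
    · -- inductive step
      rw [iteratedDeriv_succ]
      have hev : iteratedDeriv p lG =ᶠ[nhds x]
          (fun y => (-1)^p * (Nat.factorial (p-1) : ℝ) * S p y) := by
        filter_upwards [eventually_gt_nhds hx] with y hy using ih hp2 y hy
      rw [hev.deriv_eq]
      have hd : HasDerivAt (fun y => (-1)^p * (Nat.factorial (p-1) : ℝ) * S p y)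
          (((-1)^p * (Nat.factorial (p-1) : ℝ)) * (-(p:ℝ) * S (p+1) x)) x :=
        (hasDerivAt_S hp2 hx).const_mul _
      rw [hd.deriv]
      obtain ⟨q, rfl⟩ : ∃ q, p = q + 2 := ⟨p - 2, by omega⟩
      have hfac : (Nat.factorial (q+2) : ℝ) = ((q:ℝ)+2) * (Nat.factorial (q+1) : ℝ) := by
        rw [Nat.factorial_succ]; push_cast; ring
      simp only [show q+2+1-1 = q+2 from rfl, show q+2-1 = q+1 from rfl, hfac]
      push_cast
      ring


/-- The polygamma function `ψ^{(k)}`: the `k`-th derivative of the digamma function,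
i.e. the `(k+1)`-st derivative of `ln ∘ Γ`. -/
noncomputable def polygamma (k : ℕ) : ℝ → ℝ :=
  iteratedDeriv (k + 1) (fun x : ℝ => Real.log (Real.Gamma x))

theorem stmt_9 (β : ℝ) (hβ : 1 ≤ β) (x : ℝ) (hx : 0 < x) (k : ℕ) (hk : 2 ≤ k) :
    (Nat.factorial (k - 2) : ℝ) / x ^ (k - 1)
        - (β - 1 / 2) * (Nat.factorial (k - 1) : ℝ) / x ^ k
      ≤ (-1 : ℝ) ^ k * polygamma (k - 1) (x + β) := by
  rw [polygamma]
  have hy : 0 < x + β := by linarith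
  have hk1 : (k - 1) + 1 = k := by omega
  rw [hk1, main_id k hk (x+β) hy]
  have e1 : (-1:ℝ)^k * ((-1)^k * (Nat.factorial (k-1) : ℝ) * S k (x+β))
      = (Nat.factorial (k-1) : ℝ) * S k (x+β) := by
    rw [← mul_assoc, ← mul_assoc, ← mul_pow]
    norm_num
  rw [e1]
  set m := k - 1 with hm
  have hmk : k = m + 1 := by omega
  have hm1 : 1 ≤ m := by omega
  -- factorials
  have hfac : (Nat.factorial m : ℝ) = (m:ℝ) * (Nat.factorial (k-2) : ℝ) := by
    have : m = (k-2) + 1 := by omega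
    rw [this, Nat.factorial_succ]
    push_cast
    congr 2 <;> omega
  have hSl := S_lower hk hy
  have hFA := final_alg hx hβ hm1
  have hA : (0:ℝ) < (Nat.factorial (k-2) : ℝ) := by positivity
  -- S k (x+β) ≥ (k-1)⁻¹ (y^(k-1))⁻¹ + 1/2 (y^k)⁻¹, multiply by (k-1)!
  have hcast : ((k:ℝ) - 1) = (m:ℝ) := by
    rw [hmk]; push_cast; ring
  have hkm : k - 1 = m := rfl
  rw [hkm, hcast] at hSl
  have hS_nonneg : (Nat.factorial m : ℝ) * ((m:ℝ)⁻¹ * ((x+β)^m)⁻¹ + 1/2 * ((x+β)^k)⁻¹)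
      ≤ (Nat.factorial m : ℝ) * S k (x+β) := by
    apply mul_le_mul_of_nonneg_left hSl (by positivity)
  have hm0 : (0:ℝ) < m := by exact_mod_cast hm1
  have e2 : (Nat.factorial m : ℝ) * ((m:ℝ)⁻¹ * ((x+β)^m)⁻¹ + 1/2 * ((x+β)^k)⁻¹)
      = (Nat.factorial (k-2) : ℝ) * ((x+β)^m)⁻¹
        + (Nat.factorial m : ℝ)/2 * ((x+β)^k)⁻¹ := by
    rw [hfac]
    field_simp
  rw [e2] at hS_nonneg
  -- final_alg multiplied by (k-2)!
  have hFA2 : (Nat.factorial (k-2) : ℝ) * ((x^m)⁻¹ - ((x+β)^m)⁻¹)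
      ≤ (Nat.factorial (k-2) : ℝ) *
        ((m:ℝ) * (β - 1/2) * (x^(m+1))⁻¹ + (m:ℝ)/2 * ((x+β)^(m+1))⁻¹) :=
    mul_le_mul_of_nonneg_left hFA hA.le
  have hmk1 : m + 1 = k := by omega
  rw [hmk1] at hFA2
  have hdiv : ∀ a b : ℝ, a / b = a * b⁻¹ := fun a b => div_eq_mul_inv a b
  rw [hdiv, hdiv]
  have hfacm : (m:ℝ) * (Nat.factorial (k-2) : ℝ) = (Nat.factorial m : ℝ) := hfac.symm
  have hFA3 : (Nat.factorial (k-2) : ℝ) * (x^m)⁻¹ - (Nat.factorial (k-2) : ℝ) * ((x+β)^m)⁻¹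
      ≤ (β - 1/2) * (Nat.factorial m : ℝ) * (x^k)⁻¹
        + (Nat.factorial m : ℝ)/2 * ((x+β)^k)⁻¹ := by
    calc (Nat.factorial (k-2) : ℝ) * (x^m)⁻¹ - (Nat.factorial (k-2) : ℝ) * ((x+β)^m)⁻¹
        = (Nat.factorial (k-2) : ℝ) * ((x^m)⁻¹ - ((x+β)^m)⁻¹) := by ring
      _ ≤ (Nat.factorial (k-2) : ℝ) *
          ((m:ℝ) * (β - 1/2) * (x^k)⁻¹ + (m:ℝ)/2 * ((x+β)^k)⁻¹) := hFA2
      _ = (β - 1/2) * ((m:ℝ) * (Nat.factorial (k-2) : ℝ)) * (x^k)⁻¹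
          + ((m:ℝ) * (Nat.factorial (k-2) : ℝ))/2 * ((x+β)^k)⁻¹ := by ring
      _ = (β - 1/2) * (Nat.factorial m : ℝ) * (x^k)⁻¹
          + (Nat.factorial m : ℝ)/2 * ((x+β)^k)⁻¹ := by rw [hfacm]
  linarith [hS_nonneg, hFA3]
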